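/- Let H be a finite-dimensional complex inner product space, let P_E and P_O be orthogonal projections on H with P_E + P_O = 1, let ψ and φ be unit vectors, and let p, q > 0 with p + q = 1. Set Δ := p|ψ⟩⟨ψ| − q|φ⟩⟨φ|, Δ_E := P_E Δ P_E, Δ_O := P_O Δ P_O. Then the infimum over all operators Π with 0 ≤ Π ≤ 1 and Π = P_E Π P_E + P_O Π P_O of the error probability p⟪ψ, (1−Π)ψ⟫ + q⟪φ, Π φ⟫ equals ½(1 − ‖Δ_E + Δ_O‖₁), where ‖Y‖₁ = Tr √(Y† Y). -/

import Mathlib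

open Matrix
open scoped ComplexOrder Kronecker

/-- The trace norm `‖Y‖₁ = Tr √(Yᴴ Y)` of a complex matrix. -/
noncomputable def traceNorm {m : Type*} [Fintype m] [DecidableEq m]
    (Y : Matrix m m ℂ) : ℝ :=
  ((Matrix.posSemidef_conjTranspose_mul_self Y).isHermitian.eigenvectorUnitary.1 *
      diagonal (((↑) : ℝ → ℂ) ∘ (√·) ∘ (Matrix.posSemidef_conjTranspose_mul_self Y).isHermitian.eigenvalues) *
      (star (Matrix.posSemidef_conjTranspose_mul_self Y).isHermitian.eigenvectorUnitary :
        Matrix m m ℂ)).trace.re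

/-- The inner product `⟪x, y⟫ = ∑ i, conj (x i) * y i` on `m → ℂ`. -/
noncomputable def cinner {m : Type*} [Fintype m] (x y : m → ℂ) : ℂ := star x ⬝ᵥ y

/-- An orthogonal projection: a self-adjoint idempotent matrix. -/
def IsOrthoProj {m : Type*} [Fintype m] (P : Matrix m m ℂ) : Prop :=
  P.IsHermitian ∧ P * P = P

/-- An effect: an operator `S` with `0 ≤ S ≤ 1`. -/
def IsEffect {m : Type*} [Fintype m] [DecidableEq m] (S : Matrix m m ℂ) : Prop :=
  S.PosSemidef ∧ (1 - S).PosSemidef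

/-- The rank-one operator `|ψ⟩⟨ψ|`. -/
noncomputable def outer {m : Type*} (ψ : m → ℂ) : Matrix m m ℂ :=
  Matrix.vecMulVec ψ (star ψ)

namespace LoccAux
variable {n : ℕ} {A : Matrix (Fin n) (Fin n) ℂ}

/-- Functional calculus of a Hermitian matrix via the spectral theorem. -/
noncomputable def cfcM (hA : A.IsHermitian) (g : ℝ → ℝ) : Matrix (Fin n) (Fin n) ℂ :=
  hA.eigenvectorUnitary.1 * diagonal (fun i => (g (hA.eigenvalues i) : ℂ)) *
    star hA.eigenvectorUnitary.1

variable (hA : A.IsHermitian) (g h : ℝ → ℝ)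

lemma U_mul_star : hA.eigenvectorUnitary.1 * star hA.eigenvectorUnitary.1 = 1 :=
  (Matrix.mem_unitaryGroup_iff).mp hA.eigenvectorUnitary.2

lemma star_mul_U : star hA.eigenvectorUnitary.1 * hA.eigenvectorUnitary.1 = 1 :=
  (Matrix.mem_unitaryGroup_iff').mp hA.eigenvectorUnitary.2

lemma cfcM_id : cfcM hA (fun t => t) = A := by
  conv_rhs => rw [hA.spectral_theorem]
  rfl

lemma cfcM_mul : cfcM hA g * cfcM hA h = cfcM hA (fun t => g t * h t) := by
  unfold cfcM
  rw [show ∀ (X Y D E : Matrix (Fin n) (Fin n) ℂ), (X*D*Y) * (X*E*Y) = X*(D*(Y*X)*E)*Y by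
    intros; noncomm_ring]
  rw [star_mul_U, mul_one, diagonal_mul_diagonal]
  push_cast
  rfl

lemma cfcM_trace : (cfcM hA g).trace = ∑ i, (g (hA.eigenvalues i) : ℂ) := by
  unfold cfcM
  rw [trace_mul_cycle, star_mul_U, one_mul, trace_diagonal]

lemma cfcM_herm : (cfcM hA g).IsHermitian := by
  unfold cfcM
  apply Matrix.isHermitian_mul_mul_conjTranspose
  rw [Matrix.IsHermitian, diagonal_conjTranspose]
  have : (star fun i => ((g (hA.eigenvalues i) : ℝ) : ℂ))
      = fun i => ((g (hA.eigenvalues i) : ℝ) : ℂ) :=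
    funext fun i => Complex.conj_ofReal _
  rw [this]

lemma cfcM_psd (hg : ∀ t, 0 ≤ g t) : (cfcM hA g).PosSemidef := by
  unfold cfcM
  apply Matrix.PosSemidef.mul_mul_conjTranspose_same
  refine Matrix.PosSemidef.diagonal (fun i => ?_)
  simp only [Pi.zero_apply]
  exact_mod_cast hg _

lemma cfcM_sub : cfcM hA g - cfcM hA h = cfcM hA (fun t => g t - h t) := by
  unfold cfcM
  rw [← sub_mul, ← mul_sub, diagonal_sub]
  push_cast
  rfl

lemma cfcM_one : cfcM hA (fun _ => 1) = 1 := by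
  unfold cfcM
  have : (diagonal (fun _ : Fin n => ((1:ℝ) : ℂ)) : Matrix (Fin n) (Fin n) ℂ) = 1 := by
    push_cast
    exact diagonal_one
  rw [this, mul_one, U_mul_star]

lemma cfcM_comm {M : Matrix (Fin n) (Fin n) ℂ} (hM : M * A = A * M) :
    M * cfcM hA g = cfcM hA g * M := by
  set U := hA.eigenvectorUnitary.1 with hU
  set N := star U * M * U with hN
  set D := diagonal (fun i => ((hA.eigenvalues i : ℝ) : ℂ)) with hDdef
  have hD : D = star U * A * U := by
    have := hA.conjStarAlgAut_star_eigenvectorUnitary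
    rw [Unitary.conjStarAlgAut_star_apply] at this
    exact this.symm
  have h1 : N * D = D * N := by
    calc N * D = (star U * M * U) * (star U * A * U) := by rw [hD, hN]
      _ = star U * (M * ((U * star U) * A)) * U := by noncomm_ring
      _ = star U * (M * A) * U := by rw [U_mul_star]; noncomm_ring
      _ = star U * (A * M) * U := by rw [hM]
      _ = star U * (A * ((U * star U) * M)) * U := by rw [U_mul_star]; noncomm_ring
      _ = (star U * A * U) * (star U * M * U) := by noncomm_ring
      _ = D * N := by rw [hD, hN]
  have key : ∀ i j, N i j * (hA.eigenvalues j : ℂ) = (hA.eigenvalues i : ℂ) * N i j := by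
    intro i j
    have := congrFun (congrFun h1 i) j
    simpa [hDdef, mul_diagonal, diagonal_mul, mul_comm] using this
  set Dg := diagonal (fun i => ((g (hA.eigenvalues i) : ℝ) : ℂ)) with hDg
  have key2 : N * Dg = Dg * N := by
    ext i j
    simp only [hDg, mul_diagonal, diagonal_mul]
    rcases eq_or_ne (hA.eigenvalues i) (hA.eigenvalues j) with he | he
    · rw [he, mul_comm]
    · have hz : N i j = 0 := by
        have h3 : N i j * ((hA.eigenvalues j : ℂ) - (hA.eigenvalues i : ℂ)) = 0 := by
          rw [mul_sub, key i j, mul_comm, sub_self]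
        rcases mul_eq_zero.mp h3 with h4 | h4
        · exact h4
        · exfalso
          have h5 : (hA.eigenvalues j : ℂ) = (hA.eigenvalues i : ℂ) := sub_eq_zero.mp h4
          exact he (by exact_mod_cast h5.symm)
      simp [hz]
  have hMN : M = U * N * star U := by
    rw [hN]
    calc M = (U * star U) * M * (U * star U) := by rw [U_mul_star]; noncomm_ring
      _ = U * (star U * M * U) * star U := by noncomm_ring
  show M * (U * Dg * star U) = (U * Dg * star U) * M
  calc M * (U * Dg * star U)
      = (U * N * star U) * (U * Dg * star U) := by rw [← hMN]
    _ = U * (N * ((star U * U) * Dg)) * star U := by noncomm_ring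
    _ = U * (N * Dg) * star U := by rw [star_mul_U]; noncomm_ring
    _ = U * (Dg * N) * star U := by rw [key2]
    _ = U * (Dg * ((star U * U) * N)) * star U := by rw [star_mul_U]; noncomm_ring
    _ = (U * Dg * star U) * (U * N * star U) := by noncomm_ring
    _ = (U * Dg * star U) * M := by rw [← hMN]

lemma trace_nonneg_of_psd {M : Matrix (Fin n) (Fin n) ℂ} (hM : M.PosSemidef) :
    0 ≤ M.trace := by
  exact hM.trace_nonneg

lemma re_trace_mul_nonneg {T B : Matrix (Fin n) (Fin n) ℂ}
    (hT : T.PosSemidef) (hB : B.PosSemidef) : 0 ≤ ((T * B).trace).re := by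
  set S := cfcM hB.1 (fun t => √t) with hSdef
  have hS : S.PosSemidef := cfcM_psd hB.1 _ (fun t => Real.sqrt_nonneg t)
  have h1 : T * B = T * (S * S) := by
    rw [hSdef, cfcM_mul]
    have he : cfcM hB.1 (fun t => √t * √t) = cfcM hB.1 (fun t => t) := by
      have hf : (fun i => ((√(hB.1.eigenvalues i) * √(hB.1.eigenvalues i) : ℝ) : ℂ))
          = fun i => ((hB.1.eigenvalues i : ℝ) : ℂ) :=
        funext fun i => by rw [Real.mul_self_sqrt (hB.eigenvalues_nonneg i)]
      simp only [cfcM]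
      rw [hf]
    rw [he, cfcM_id]
  have h2 : (T * (S * S)).trace = (S * T * S).trace := by
    rw [← mul_assoc, trace_mul_cycle]
  have h3 : (S * T * S).PosSemidef := by
    have := hT.mul_mul_conjTranspose_same S
    rwa [hS.1] at this
  have h4 := trace_nonneg_of_psd h3
  rw [h1, h2]
  rw [Complex.le_def] at h4
  simpa using h4.1

lemma re_trace_mul_le {T B : Matrix (Fin n) (Fin n) ℂ}
    (hT : (1 - T).PosSemidef) (hB : B.PosSemidef) :
    ((T * B).trace).re ≤ (B.trace).re := by
  have := re_trace_mul_nonneg hT hB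
  rw [sub_mul, one_mul, trace_sub] at this
  simp only [Complex.sub_re] at this
  linarith

lemma trace_mul_outer (T : Matrix (Fin n) (Fin n) ℂ) (ψ : Fin n → ℂ) :
    (T * Matrix.vecMulVec ψ (star ψ)).trace = star ψ ⬝ᵥ (T.mulVec ψ) := by
  simp only [Matrix.trace, Matrix.diag, Matrix.mul_apply, Matrix.vecMulVec_apply,
    dotProduct, Matrix.mulVec, Pi.star_apply]
  congr 1
  ext i
  rw [Finset.mul_sum]
  congr 1
  ext j
  ring

lemma trace_outer (ψ : Fin n → ℂ) :
    (Matrix.vecMulVec ψ (star ψ)).trace = star ψ ⬝ᵥ ψ := by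
  simp only [Matrix.trace, Matrix.diag, Matrix.vecMulVec_apply, dotProduct, Pi.star_apply]
  congr 1; ext i; ring

end LoccAux

open LoccAux in
/-- **Theorem 4.** The optimal error probability for discriminating `p|ψ⟩⟨ψ|` from
`q|φ⟩⟨φ|` by block-diagonal (separable, equivalently LOCC) effects is
`(1 − ‖Δ_E + Δ_O‖₁)/2`. -/
theorem optimal_locc_error
    {n : ℕ} (P_E P_O : Matrix (Fin n) (Fin n) ℂ)
    (hPE : IsOrthoProj P_E) (hPO : IsOrthoProj P_O) (hsum : P_E + P_O = 1)
    (ψ φ : Fin n → ℂ) (hψ : cinner ψ ψ = 1) (hφ : cinner φ φ = 1)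
    (p q : ℝ) (hp : 0 < p) (hq : 0 < q) (hpq : p + q = 1)
    (Δ : Matrix (Fin n) (Fin n) ℂ) (hΔ : Δ = (p : ℂ) • outer ψ - (q : ℂ) • outer φ) :
    IsGLB {x : ℝ | ∃ T : Matrix (Fin n) (Fin n) ℂ, IsEffect T ∧
        T = P_E * T * P_E + P_O * T * P_O ∧
        x = p * (cinner ψ ((1 - T).mulVec ψ)).re + q * (cinner φ (T.mulVec φ)).re}
      ((1 - traceNorm (P_E * Δ * P_E + P_O * Δ * P_O)) / 2) := by
  classical
  set Δ' : Matrix (Fin n) (Fin n) ℂ := P_E * Δ * P_E + P_O * Δ * P_O with hΔ'def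
  -- basic projection algebra
  have hEO : P_E * P_O = 0 := by
    have hPOe : P_O = 1 - P_E := by rw [← hsum]; abel
    rw [hPOe, mul_sub, mul_one, hPE.2, sub_self]
  have hOE : P_O * P_E = 0 := by
    have hPOe : P_O = 1 - P_E := by rw [← hsum]; abel
    rw [hPOe, sub_mul, one_mul, hPE.2, sub_self]
  -- Δ is Hermitian
  have houterH : ∀ χ : Fin n → ℂ, (outer χ).IsHermitian := by
    intro χ
    rw [Matrix.IsHermitian]
    ext i j
    simp only [Matrix.conjTranspose_apply, outer, Matrix.vecMulVec_apply, Pi.star_apply,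
      star_mul', star_star]
    ring
  have hΔH : Δ.IsHermitian := by
    rw [hΔ, Matrix.IsHermitian, Matrix.conjTranspose_sub]
    simp only [Matrix.conjTranspose_smul, (houterH ψ).eq, (houterH φ).eq,
      Complex.star_def, Complex.conj_ofReal]
  have hΔ'H : Δ'.IsHermitian := by
    rw [hΔ'def, Matrix.IsHermitian, Matrix.conjTranspose_add]
    simp only [Matrix.conjTranspose_mul, hPE.1.eq, hPO.1.eq, hΔH.eq]
    rw [mul_assoc, mul_assoc]
  set lam := hΔ'H.eigenvalues with hlam
  -- commutation
  have hcommE : P_E * Δ' = Δ' * P_E := by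
    have h1 : P_E * Δ' = P_E * Δ * P_E := by
      rw [hΔ'def, mul_add,
        show P_E * (P_E * Δ * P_E) = (P_E * P_E) * Δ * P_E by noncomm_ring,
        show P_E * (P_O * Δ * P_O) = (P_E * P_O) * (Δ * P_O) by noncomm_ring,
        hPE.2, hEO, zero_mul, add_zero]
    have h2 : Δ' * P_E = P_E * Δ * P_E := by
      rw [hΔ'def, add_mul,
        show P_E * Δ * P_E * P_E = P_E * Δ * (P_E * P_E) by noncomm_ring,
        show P_O * Δ * P_O * P_E = (P_O * Δ) * (P_O * P_E) by noncomm_ring,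
        hPE.2, hOE, mul_zero, add_zero]
    rw [h1, h2]
  have hcommO : P_O * Δ' = Δ' * P_O := by
    have h1 : P_O * Δ' = P_O * Δ * P_O := by
      rw [hΔ'def, mul_add,
        show P_O * (P_E * Δ * P_E) = (P_O * P_E) * (Δ * P_E) by noncomm_ring,
        show P_O * (P_O * Δ * P_O) = (P_O * P_O) * Δ * P_O by noncomm_ring,
        hPO.2, hOE, zero_mul, zero_add]
    have h2 : Δ' * P_O = P_O * Δ * P_O := by
      rw [hΔ'def, add_mul,
        show P_E * Δ * P_E * P_O = (P_E * Δ) * (P_E * P_O) by noncomm_ring,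
        show P_O * Δ * P_O * P_O = P_O * Δ * (P_O * P_O) by noncomm_ring,
        hPO.2, hEO, mul_zero, zero_add]
    rw [h1, h2]
  -- trace identities
  have htraceΔ : Δ.trace = ((p : ℂ) - (q : ℂ)) := by
    rw [hΔ, Matrix.trace_sub, Matrix.trace_smul, Matrix.trace_smul]
    unfold outer
    rw [trace_outer, trace_outer]
    rw [show star ψ ⬝ᵥ ψ = cinner ψ ψ from rfl, show star φ ⬝ᵥ φ = cinner φ φ from rfl,
      hψ, hφ]
    simp
  have htraceΔ' : Δ'.trace = ((p : ℂ) - (q : ℂ)) := by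
    rw [hΔ'def, Matrix.trace_add, trace_mul_cycle (P_E) Δ (P_E), hPE.2,
      trace_mul_cycle (P_O) Δ (P_O), hPO.2, ← Matrix.trace_add,
      ← Matrix.add_mul, hsum, one_mul, htraceΔ]
  have hsumlam : ∑ i, lam i = p - q := by
    have h1 : Δ'.trace = ∑ i, (lam i : ℂ) := by
      conv_lhs => rw [← cfcM_id hΔ'H]
      rw [cfcM_trace]
    rw [htraceΔ'] at h1
    have h2 : ((∑ i, lam i : ℝ) : ℂ) = ((p - q : ℝ) : ℂ) := by
      push_cast
      rw [← h1]
    exact_mod_cast h2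
  -- trace norm = sum of |eigenvalues|
  have habs : traceNorm Δ' = ∑ i, |lam i| := by
    have hsa : IsSelfAdjoint Δ' := hΔ'H
    have hX := (Matrix.posSemidef_conjTranspose_mul_self Δ').isHermitian
    have e1 : traceNorm Δ' = (cfc Real.sqrt (Δ'ᴴ * Δ')).trace.re := by
      rw [hX.cfc_eq, IsHermitian.cfc, Unitary.conjStarAlgAut_apply]; rfl
    have e2 : Δ'ᴴ * Δ' = cfc (fun t : ℝ => t * t) Δ' := by
      rw [cfc_mul (fun t : ℝ => t) (fun t : ℝ => t) Δ', cfc_id' ℝ Δ', hΔ'H.eq]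
    have e3 : cfc Real.sqrt (cfc (fun t : ℝ => t * t) Δ') = cfc (fun t : ℝ => |t|) Δ' := by
      rw [← cfc_comp Real.sqrt (fun t : ℝ => t * t) Δ']
      congr 1
      funext t
      exact Real.sqrt_mul_self_eq_abs t
    have e4 : cfc (fun t : ℝ => |t|) Δ' = cfcM hΔ'H (fun t => |t|) := by
      rw [hΔ'H.cfc_eq, IsHermitian.cfc, Unitary.conjStarAlgAut_apply]; rfl
    rw [e1, e2, e3, e4, cfcM_trace]
    rw [show (∑ i, ((|lam i| : ℝ) : ℂ)) = ((∑ i, |lam i| : ℝ) : ℂ) by push_cast; rfl]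
    exact Complex.ofReal_re _
  -- the generic value formula
  have hval : ∀ T : Matrix (Fin n) (Fin n) ℂ,
      p * (cinner ψ ((1 - T).mulVec ψ)).re + q * (cinner φ (T.mulVec φ)).re
        = p - ((T * Δ).trace).re := by
    intro T
    have h1 : cinner ψ ((1 - T).mulVec ψ) = cinner ψ ψ - cinner ψ (T.mulVec ψ) := by
      rw [Matrix.sub_mulVec, Matrix.one_mulVec]
      exact dotProduct_sub _ _ _
    have h2 : (T * Δ).trace
        = (p : ℂ) * cinner ψ (T.mulVec ψ) - (q : ℂ) * cinner φ (T.mulVec φ) := by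
      rw [hΔ, mul_sub, Matrix.trace_sub, Matrix.mul_smul, Matrix.mul_smul,
        Matrix.trace_smul, Matrix.trace_smul]
      unfold outer
      rw [trace_mul_outer, trace_mul_outer]
      simp [cinner, smul_eq_mul]
    rw [h1, h2, hψ]
    simp only [Complex.sub_re, Complex.one_re, Complex.re_ofReal_mul]
    ring
  -- block-diagonal trace reduction
  have hblk : ∀ T : Matrix (Fin n) (Fin n) ℂ,
      T = P_E * T * P_E + P_O * T * P_O → (T * Δ).trace = (T * Δ').trace := by
    intro T hT
    have h1 : (T * Δ).trace = ((P_E * T * P_E + P_O * T * P_O) * Δ).trace := by rw [← hT]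
    rw [h1, Matrix.add_mul, Matrix.trace_add, hΔ'def, mul_add, Matrix.trace_add]
    congr 1
    · rw [show P_E * T * P_E * Δ = P_E * (T * (P_E * Δ)) by noncomm_ring,
        trace_mul_comm, show T * (P_E * Δ) * P_E = T * (P_E * Δ * P_E) by noncomm_ring]
    · rw [show P_O * T * P_O * Δ = P_O * (T * (P_O * Δ)) by noncomm_ring,
        trace_mul_comm, show T * (P_O * Δ) * P_O = T * (P_O * Δ * P_O) by noncomm_ring]
  -- positive and negative parts
  set Bp := cfcM hΔ'H (fun t => max t 0) with hBp
  set Bm := cfcM hΔ'H (fun t => max (-t) 0) with hBm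
  have hBppsd : Bp.PosSemidef := cfcM_psd hΔ'H _ (fun t => le_max_right t 0)
  have hBmpsd : Bm.PosSemidef := cfcM_psd hΔ'H _ (fun t => le_max_right (-t) 0)
  have hsplit : Δ' = Bp - Bm := by
    rw [hBp, hBm, cfcM_sub]
    have he : (fun t : ℝ => max t 0 - max (-t) 0) = fun t : ℝ => t :=
      funext fun t => max_zero_sub_max_neg_zero_eq_self t
    rw [he, cfcM_id]
  have htrBp : (Bp.trace).re = ∑ i, max (lam i) 0 := by
    rw [hBp, cfcM_trace,
      show (∑ i, ((max (lam i) 0 : ℝ) : ℂ)) = ((∑ i, max (lam i) 0 : ℝ) : ℂ) by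
        push_cast; rfl]
    exact Complex.ofReal_re _
  have hposcalc : ∑ i, max (lam i) 0 = ((p - q) + ∑ i, |lam i|) / 2 := by
    have h2 : ∀ i, max (lam i) 0 = (lam i + |lam i|) / 2 := by
      intro i
      have ha := max_zero_sub_max_neg_zero_eq_self (lam i)
      have hb := max_zero_add_max_neg_zero_eq_abs_self (lam i)
      linarith
    calc ∑ i, max (lam i) 0 = ∑ i, (lam i + |lam i|) / 2 :=
          Finset.sum_congr rfl (fun i _ => h2 i)
      _ = (∑ i, (lam i + |lam i|)) / 2 := by rw [Finset.sum_div]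
      _ = ((∑ i, lam i) + ∑ i, |lam i|) / 2 := by rw [Finset.sum_add_distrib]
      _ = ((p - q) + ∑ i, |lam i|) / 2 := by rw [hsumlam]
  -- lower bound for arbitrary block effects
  have hlb : ∀ x ∈ {x : ℝ | ∃ T : Matrix (Fin n) (Fin n) ℂ, IsEffect T ∧
        T = P_E * T * P_E + P_O * T * P_O ∧
        x = p * (cinner ψ ((1 - T).mulVec ψ)).re + q * (cinner φ (T.mulVec φ)).re},
      (1 - traceNorm Δ') / 2 ≤ x := by
    rintro x ⟨T, hTeff, hTblk, hx⟩
    rw [hval T] at hx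
    rw [hblk T hTblk] at hx
    have hsplit' : (T * Δ').trace = (T * Bp).trace - (T * Bm).trace := by
      rw [hsplit, mul_sub, Matrix.trace_sub]
    have hb1 : ((T * Bp).trace).re ≤ (Bp.trace).re := re_trace_mul_le hTeff.2 hBppsd
    have hb2 : 0 ≤ ((T * Bm).trace).re := re_trace_mul_nonneg hTeff.1 hBmpsd
    have hb3 : ((T * Δ').trace).re ≤ ∑ i, max (lam i) 0 := by
      rw [hsplit', Complex.sub_re, ← htrBp]
      linarith
    rw [habs]
    rw [hposcalc] at hb3
    rw [hx]
    linarith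
  -- optimal effect
  set T₀ := cfcM hΔ'H (fun t => if 0 < t then 1 else 0) with hT₀
  have hT₀eff : IsEffect T₀ := by
    constructor
    · exact cfcM_psd hΔ'H _ (fun t => by positivity)
    · have h1 : (1 : Matrix (Fin n) (Fin n) ℂ) - T₀
          = cfcM hΔ'H (fun t => 1 - (if 0 < t then 1 else 0)) := by
        rw [hT₀, ← cfcM_sub, cfcM_one]
      rw [h1]
      refine cfcM_psd hΔ'H _ (fun t => ?_)
      split <;> norm_num
  have hT₀blk : T₀ = P_E * T₀ * P_E + P_O * T₀ * P_O := by
    have hc1 : P_E * T₀ = T₀ * P_E := cfcM_comm hΔ'H _ hcommE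
    have hc2 : P_O * T₀ = T₀ * P_O := cfcM_comm hΔ'H _ hcommO
    rw [hc1, hc2, mul_assoc, mul_assoc, hPE.2, hPO.2, ← mul_add, hsum, mul_one]
  have hT₀val : ((T₀ * Δ').trace).re = ∑ i, max (lam i) 0 := by
    have h1 : T₀ * Δ' = cfcM hΔ'H (fun t => max t 0) := by
      calc T₀ * Δ' = cfcM hΔ'H (fun t => if 0 < t then 1 else 0)
            * cfcM hΔ'H (fun t => t) := by rw [cfcM_id]
        _ = cfcM hΔ'H (fun t => (if 0 < t then 1 else 0) * t) := cfcM_mul hΔ'H _ _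
        _ = cfcM hΔ'H (fun t => max t 0) := by
            have hfun : (fun t : ℝ => (if 0 < t then (1:ℝ) else 0) * t)
                = fun t : ℝ => max t 0 := by
              funext t
              rcases lt_or_ge 0 t with h | h
              · simp [h, max_eq_left h.le]
              · simp [not_lt.mpr h, max_eq_right h]
            rw [hfun]
    rw [h1, cfcM_trace,
      show (∑ i, ((max (lam i) 0 : ℝ) : ℂ)) = ((∑ i, max (lam i) 0 : ℝ) : ℂ) by
        push_cast; rfl]
    exact Complex.ofReal_re _
  have hmem : (1 - traceNorm Δ') / 2 ∈ {x : ℝ | ∃ T : Matrix (Fin n) (Fin n) ℂ,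
      IsEffect T ∧ T = P_E * T * P_E + P_O * T * P_O ∧
      x = p * (cinner ψ ((1 - T).mulVec ψ)).re + q * (cinner φ (T.mulVec φ)).re} := by
    refine ⟨T₀, hT₀eff, hT₀blk, ?_⟩
    rw [hval T₀, hblk T₀ hT₀blk, hT₀val, hposcalc, habs]
    linarith
  exact ⟨hlb, fun b hb => hb hmem⟩
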